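/- Let a > −1 and b > 0. For all t > 0, x > 0, and λ ≥ 0, with p(t,x,y) = (y I_a(by)/(t I_a(bx))) exp( −(x²+y²)/(2t) − b²t/2 ) I_a(xy/t), one has ∫_0^∞ e^{−λ y²} p(t,x,y) dy = ( I_a( bx/(1+2λt) ) / ( (1+2λt) I_a(bx) ) ) · exp( −λ(x² + b²t²)/(1+2λt) ). -/

import Mathlib

open Real MeasureTheory


/-- rising factorial `x (x+1) ⋯ (x+n-1)` -/
noncomputable def pr : ℕ → ℝ → ℝ
  | 0, _ => 1
  | (n+1), x => pr n x * (x + n)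

lemma pr_zero (x : ℝ) : pr 0 x = 1 := rfl
lemma pr_succ (n : ℕ) (x : ℝ) : pr (n+1) x = pr n x * (x + n) := rfl

lemma pr_pos {x : ℝ} (hx : 0 < x) (n : ℕ) : 0 < pr n x := by
  induction n with
  | zero => norm_num [pr_zero]
  | succ n ih => rw [pr_succ]; positivity

lemma pr_succ_left (n : ℕ) (x : ℝ) : pr (n+1) x = x * pr n (x+1) := by
  induction n generalizing x with
  | zero => simp [pr_succ, pr_zero]
  | succ n ih =>
      rw [pr_succ, ih, pr_succ]
      push_cast
      ring

lemma pr_add_eval (m k : ℕ) (x : ℝ) : pr (m + k) x = pr m x * pr k (x + m) := by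
  induction k with
  | zero => simp [pr_zero]
  | succ k ih =>
      have h : m + (k+1) = (m + k) + 1 := by ring
      rw [h, pr_succ, ih, pr_succ]
      push_cast
      ring

lemma pr_step (k : ℕ) (y : ℝ) : pr (k+1) (y+1) = pr (k+1) y + (k+1) * pr k (y+1) := by
  rw [pr_succ, pr_succ_left]
  ring

lemma Gamma_pr {x : ℝ} (hx : 0 < x) (n : ℕ) : Real.Gamma (x + n) = pr n x * Real.Gamma x := by
  induction n with
  | zero => simp [pr_zero]
  | succ n ih =>
      have h1 : x + (((n:ℝ))+1) = (x + n) + 1 := by ring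
      push_cast
      rw [h1, Real.Gamma_add_one (by positivity), ih, pr_succ]
      ring

/-- Chu–Vandermonde type identity for rising factorials. -/
lemma vdm : ∀ (k m : ℕ) (c : ℝ),
    ∑ i ∈ Finset.range (k+1),
      ((k.choose i : ℝ) * (m.choose i) * (i.factorial)) * pr (k-i) (c+i) = pr k (c+m) := by
  intro k
  induction k with
  | zero => intro m c; simp [pr_zero]
  | succ k ihk =>
      intro m
      induction m with
      | zero =>
          intro c
          rw [Finset.sum_eq_single 0]
          · simp [pr_zero]
          · intro i _ hi
            rcases Nat.exists_eq_succ_of_ne_zero hi with ⟨j, rfl⟩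
            simp [Nat.choose_zero_succ]
          · intro h; exact absurd (Finset.mem_range.2 (Nat.succ_pos _)) h
      | succ m ihm =>
          intro c
          have hD : ∑ i ∈ Finset.range (k+1+1),
              (((k+1).choose i : ℝ) * (if i = 0 then (0:ℝ) else ((m).choose (i-1):ℝ)) * (i.factorial)) * pr (k+1-i) (c+i)
              = (k+1) * pr k ((c+1)+m) := by
            rw [Finset.sum_range_succ']
            have hterm : ∀ j, (((k+1).choose (j+1) : ℝ) * (if j+1 = 0 then (0:ℝ) else ((m).choose (j+1-1):ℝ)) * ((j+1).factorial)) * pr (k+1-(j+1)) (c+(↑(j+1):ℝ))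
                = (k+1) * (((k.choose j : ℝ) * (m.choose j) * (j.factorial)) * pr (k-j) ((c+1)+j)) := by
              intro j
              have h1 : ((k+1:ℕ) : ℝ) * (k.choose j) = ((k+1).choose (j+1) : ℝ) * (j+1) := by
                exact_mod_cast congrArg (Nat.cast : ℕ → ℝ) (Nat.add_one_mul_choose_eq k j)
              have h2 : ((j+1).factorial : ℝ) = ((j:ℝ)+1) * (j.factorial) := by
                push_cast [Nat.factorial_succ]; ring
              have h3 : c + ((j:ℝ)+1) = (c+1) + j := by ring
              have h4 : k+1-(j+1) = k - j := by omega
              simp only [if_neg (Nat.succ_ne_zero j), Nat.add_sub_cancel, h4, h2]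
              push_cast
              rw [h3]
              push_cast at h1
              linear_combination (-((m.choose j : ℝ) * (j.factorial) * pr (k-j) ((c+1)+j))) * h1
            rw [Finset.sum_congr rfl (fun j _ => hterm j)]
            rw [← Finset.mul_sum, ihk m (c+1)]
            simp
          have key : ∀ i, ((k+1).choose i : ℝ) * ((m+1).choose i) * (i.factorial)
              = ((k+1).choose i : ℝ) * ((m).choose i) * (i.factorial)
              + ((k+1).choose i : ℝ) * (if i = 0 then (0:ℝ) else ((m).choose (i-1) : ℝ)) * (i.factorial) := by
            intro i
            cases i with
            | zero => simp
            | succ i =>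
                rw [Nat.choose_succ_succ m i, if_neg (Nat.succ_ne_zero i)]
                push_cast [Nat.add_sub_cancel]
                ring
          calc ∑ i ∈ Finset.range (k+1+1),
              (((k+1).choose i : ℝ) * ((m+1).choose i) * (i.factorial)) * pr (k+1-i) (c+i)
              = (∑ i ∈ Finset.range (k+1+1),
                  (((k+1).choose i : ℝ) * ((m).choose i) * (i.factorial)) * pr (k+1-i) (c+i))
                + ∑ i ∈ Finset.range (k+1+1),
                  (((k+1).choose i : ℝ) * (if i = 0 then (0:ℝ) else ((m).choose (i-1):ℝ)) * (i.factorial)) * pr (k+1-i) (c+i) := by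
                rw [← Finset.sum_add_distrib]
                refine Finset.sum_congr rfl fun i _ => ?_
                rw [key i]; ring
            _ = pr (k+1) (c+m) + (k+1) * pr k ((c+1)+m) := by rw [ihm c, hD]
            _ = pr (k+1) (c+(↑(m+1):ℝ)) := by
                have h5 : c + ((m:ℝ)+1) = (c+m)+1 := by ring
                have h6 : (c+1) + (m:ℝ) = (c+m)+1 := by ring
                push_cast
                rw [h5, h6, pr_step]

/-- The modified Bessel function of the first kind,
`I_ν(z) = ∑_{k=0}^∞ (z/2)^{2k+ν} / (k! Γ(k+ν+1))`. -/
noncomputable def besselI (ν z : ℝ) : ℝ :=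
  ∑' k : ℕ, (z / 2) ^ (2 * (k : ℝ) + ν) / ((Nat.factorial k : ℝ) * Real.Gamma ((k : ℝ) + ν + 1))

lemma coefid {a : ℝ} (ha : -1 < a) (k m : ℕ) :
    Real.Gamma (k+m+a+1) / ((k.factorial : ℝ) * Real.Gamma (k+a+1) * ((m.factorial : ℝ) * Real.Gamma (m+a+1)))
    = ∑ i ∈ Finset.range (k+1), (if i ≤ m then
        ((i.factorial : ℝ) * (k-i).factorial * (m-i).factorial * Real.Gamma (i+a+1))⁻¹ else 0) := by
  have h0 : (0:ℝ) < a + 1 := by linarith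
  have hG : ∀ n : ℕ, Real.Gamma (n + a + 1) = pr n (a+1) * Real.Gamma (a+1) := by
    intro n
    have := Gamma_pr h0 n
    rw [show (a+1) + (n:ℝ) = (n:ℝ) + a + 1 by ring] at this
    exact this
  have hkm : Real.Gamma ((k:ℝ)+m+a+1) = Real.Gamma (m+a+1) * pr k ((a+1)+m) := by
    have h1 : ((k:ℝ)+m+a+1) = ((m+k : ℕ) : ℝ) + a + 1 := by push_cast; ring
    rw [h1, hG (m+k), pr_add_eval, hG m]
    ring
  rw [hkm, vdm k m (a+1) |>.symm, Finset.mul_sum, Finset.sum_div]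
  refine Finset.sum_congr rfl fun i hi => ?_
  have hik : i ≤ k := Nat.lt_succ_iff.mp (Finset.mem_range.mp hi)
  by_cases him : i ≤ m
  · rw [if_pos him]
    have hc1 : ((k.choose i : ℕ) : ℝ) * (i.factorial) * ((k-i).factorial) = (k.factorial : ℝ) := by
      exact_mod_cast congrArg (Nat.cast : ℕ → ℝ) (Nat.choose_mul_factorial_mul_factorial hik)
    have hc2 : ((m.choose i : ℕ) : ℝ) * (i.factorial) * ((m-i).factorial) = (m.factorial : ℝ) := by
      exact_mod_cast congrArg (Nat.cast : ℕ → ℝ) (Nat.choose_mul_factorial_mul_factorial him)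
    have hpr : pr (k-i) ((a+1)+i) * Real.Gamma (i+a+1) = Real.Gamma (k+a+1) := by
      have h2 := Gamma_pr (x := (a+1)+(i:ℝ)) (by positivity) (k-i)
      rw [show ((a+1)+(i:ℝ)) + ((k-i : ℕ):ℝ) = (k:ℝ)+a+1 by
            rw [Nat.cast_sub hik]; ring,
          show ((a+1)+(i:ℝ)) = (i:ℝ)+a+1 by ring] at h2
      rw [h2]; ring
    have hGi : (0:ℝ) < Real.Gamma (i+a+1) := Real.Gamma_pos_of_pos (by
      have : (0:ℝ) ≤ (i:ℝ) := Nat.cast_nonneg i; linarith)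
    have hGk : (0:ℝ) < Real.Gamma (k+a+1) := Real.Gamma_pos_of_pos (by
      have : (0:ℝ) ≤ (k:ℝ) := Nat.cast_nonneg k; linarith)
    have hGm : (0:ℝ) < Real.Gamma (m+a+1) := Real.Gamma_pos_of_pos (by
      have : (0:ℝ) ≤ (m:ℝ) := Nat.cast_nonneg m; linarith)
    have f1 : ((i.factorial : ℕ):ℝ) ≠ 0 := Nat.cast_ne_zero.2 (Nat.factorial_ne_zero i)
    have f2 : (((k-i).factorial : ℕ):ℝ) ≠ 0 := Nat.cast_ne_zero.2 (Nat.factorial_ne_zero _)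
    have f3 : (((m-i).factorial : ℕ):ℝ) ≠ 0 := Nat.cast_ne_zero.2 (Nat.factorial_ne_zero _)
    have f4 : ((k.factorial : ℕ):ℝ) ≠ 0 := Nat.cast_ne_zero.2 (Nat.factorial_ne_zero k)
    have f5 : ((m.factorial : ℕ):ℝ) ≠ 0 := Nat.cast_ne_zero.2 (Nat.factorial_ne_zero m)
    have f1' : (0:ℝ) < (i.factorial : ℝ) := by exact_mod_cast Nat.factorial_pos i
    have f2' : (0:ℝ) < ((k-i).factorial : ℝ) := by exact_mod_cast Nat.factorial_pos (k-i)
    have f3' : (0:ℝ) < ((m-i).factorial : ℝ) := by exact_mod_cast Nat.factorial_pos (m-i)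
    have f4' : (0:ℝ) < (k.factorial : ℝ) := by exact_mod_cast Nat.factorial_pos k
    have f5' : (0:ℝ) < (m.factorial : ℝ) := by exact_mod_cast Nat.factorial_pos m
    rw [inv_eq_one_div, div_eq_div_iff (by positivity) (by positivity), ← hc1, ← hc2, ← hpr]
    ring
  · rw [if_neg him, Nat.choose_eq_zero_of_lt (Nat.lt_of_not_le him)]
    simp

noncomputable def bterm (ν z : ℝ) (k : ℕ) : ℝ :=
  (z / 2) ^ (2 * (k : ℝ) + ν) / ((Nat.factorial k : ℝ) * Real.Gamma ((k : ℝ) + ν + 1))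

lemma besselI_eq_tsum (ν z : ℝ) : besselI ν z = ∑' k, bterm ν z k := rfl

lemma bterm_pos {ν z : ℝ} (hν : -1 < ν) (hz : 0 < z) (k : ℕ) : 0 < bterm ν z k := by
  have h1 : (0:ℝ) < (z/2) ^ (2*(k:ℝ)+ν) := Real.rpow_pos_of_pos (by positivity) _
  have h2 : (0:ℝ) < Real.Gamma ((k:ℝ)+ν+1) := Real.Gamma_pos_of_pos (by
    have : (0:ℝ) ≤ (k:ℝ) := Nat.cast_nonneg k
    linarith)
  have h3 : (0:ℝ) < (k.factorial : ℝ) := by exact_mod_cast Nat.factorial_pos k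
  exact div_pos h1 (by positivity)

lemma bterm_succ {ν z : ℝ} (hν : -1 < ν) (hz : 0 < z) (k : ℕ) :
    bterm ν z (k+1) = bterm ν z k * ((z/2)^2 / (((k:ℝ)+1) * ((k:ℝ)+ν+1))) := by
  have hz2 : (0:ℝ) < z/2 := by positivity
  have hkν : (0:ℝ) < (k:ℝ)+ν+1 := by
    have : (0:ℝ) ≤ (k:ℝ) := Nat.cast_nonneg k
    linarith
  have hrp : (z/2) ^ (2*(((k:ℕ):ℝ)+1)+ν) = (z/2) ^ (2*(k:ℝ)+ν) * (z/2)^2 := by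
    rw [show 2*(((k:ℕ):ℝ)+1)+ν = (2*(k:ℝ)+ν) + ((2:ℕ):ℝ) by push_cast; ring,
      Real.rpow_add hz2, Real.rpow_natCast]
  have hΓ : Real.Gamma (((k+1 : ℕ):ℝ)+ν+1) = ((k:ℝ)+ν+1) * Real.Gamma ((k:ℝ)+ν+1) := by
    rw [show (((k+1 : ℕ):ℝ)+ν+1) = ((k:ℝ)+ν+1) + 1 by push_cast; ring,
      Real.Gamma_add_one (ne_of_gt hkν)]
  have hfac : (((k+1).factorial : ℕ):ℝ) = ((k:ℝ)+1) * (k.factorial : ℝ) := by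
    push_cast [Nat.factorial_succ]; ring
  have hΓ0 : (0:ℝ) < Real.Gamma ((k:ℝ)+ν+1) := Real.Gamma_pos_of_pos hkν
  have h3 : (0:ℝ) < (k.factorial : ℝ) := by exact_mod_cast Nat.factorial_pos k
  unfold bterm
  push_cast at hrp hΓ hfac ⊢
  rw [hrp, hΓ, hfac]
  field_simp

lemma bsummable {ν z : ℝ} (hν : -1 < ν) (hz : 0 < z) : Summable (bterm ν z) := by
  refine summable_of_ratio_norm_eventually_le (r := 1/2) (by norm_num) ?_
  have hmain : ∀ᶠ (k:ℕ) in Filter.atTop, (z/2)^2 / (((k:ℝ)+1) * ((k:ℝ)+ν+1)) ≤ 1/2 := by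
    refine Filter.eventually_atTop.2 ⟨max (Nat.ceil ((z/2)^2*2)) (Nat.ceil |ν|), fun k hk => ?_⟩
    have hk1 : ((z/2)^2*2 : ℝ) ≤ (k:ℝ) := by
      calc ((z/2)^2*2 : ℝ) ≤ (Nat.ceil ((z/2)^2*2) : ℝ) := Nat.le_ceil _
        _ ≤ (k:ℝ) := Nat.cast_le.2 (le_trans (le_max_left _ _) hk)
    have hk2 : |ν| ≤ (k:ℝ) := by
      calc |ν| ≤ (Nat.ceil |ν| : ℝ) := Nat.le_ceil _
        _ ≤ (k:ℝ) := Nat.cast_le.2 (le_trans (le_max_right _ _) hk)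
    have hν' : -ν ≤ (k:ℝ) := le_trans (neg_le_abs ν) hk2
    have hd1 : ((z/2)^2*2 : ℝ) ≤ (k:ℝ)+1 := by linarith
    have hd2 : (1:ℝ) ≤ (k:ℝ)+ν+1 := by linarith
    rw [div_le_iff₀ (by nlinarith)]
    nlinarith [sq_nonneg (z/2)]
  filter_upwards [hmain] with k hk
  have hkν : (0:ℝ) < (k:ℝ)+ν+1 := by
    have : (0:ℝ) ≤ (k:ℝ) := Nat.cast_nonneg k
    linarith
  have hrat : (0:ℝ) ≤ (z/2)^2 / (((k:ℝ)+1) * ((k:ℝ)+ν+1)) := by positivity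
  rw [bterm_succ hν hz k, norm_mul, Real.norm_of_nonneg hrat]
  calc ‖bterm ν z k‖ * ((z/2)^2 / (((k:ℝ)+1) * ((k:ℝ)+ν+1)))
      ≤ ‖bterm ν z k‖ * (1/2) := by
        exact mul_le_mul_of_nonneg_left hk (norm_nonneg _)
    _ = 1/2 * ‖bterm ν z k‖ := by ring

lemma besselI_pos {ν z : ℝ} (hν : -1 < ν) (hz : 0 < z) : 0 < besselI ν z := by
  rw [besselI_eq_tsum]
  exact Summable.tsum_pos (bsummable hν hz) (fun k => (bterm_pos hν hz k).le) 0 (bterm_pos hν hz 0)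

lemma exp_tsum (x : ℝ) : Real.exp x = ∑' n : ℕ, x^n / n.factorial := by
  rw [Real.exp_eq_exp_ℝ, NormedSpace.exp_eq_tsum_div]

lemma measurable_rpow_const (r : ℝ) : Measurable fun x : ℝ => x ^ r := by
  apply measurable_of_continuousOn_compl_singleton 0
  intro x hx
  exact (Real.continuousAt_rpow_const x r (Or.inl hx)).continuousWithinAt

lemma gamma_pos_shift {ν : ℝ} (hν : -1 < ν) (k : ℕ) : (0:ℝ) < Real.Gamma ((k:ℝ)+ν+1) :=
  Real.Gamma_pos_of_pos (by have : (0:ℝ) ≤ (k:ℝ) := Nat.cast_nonneg k; linarith)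

lemma weber {a c α β : ℝ} (ha : -1 < a) (hc : 0 < c) (hα : 0 < α) (hβ : 0 < β) :
    ∫ y in Set.Ioi (0:ℝ), y * Real.exp (-c*y^2) * besselI a (α*y) * besselI a (β*y)
      = (1/(2*c)) * Real.exp ((α^2+β^2)/(4*c)) * besselI a (α*β/(2*c)) := by
  -- the summand family (with indicator), globally defined
  set g0 : ℕ×ℕ → ℝ → ℝ := fun q y =>
    bterm a (α*y) q.1 * bterm a (β*y) q.2 * (y * Real.exp (-c*y^2)) with hg0
  set g : ℕ×ℕ → ℝ → ℝ := fun q => (Set.Ioi (0:ℝ)).indicator (g0 q) with hg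
  have hg0nn : ∀ q (y : ℝ), 0 < y → 0 ≤ g0 q y := by
    intro q y hy
    have h1 := bterm_pos ha (by positivity : (0:ℝ) < α*y) q.1
    have h2 := bterm_pos ha (by positivity : (0:ℝ) < β*y) q.2
    have : (0:ℝ) < Real.exp (-c*y^2) := Real.exp_pos _
    positivity
  have hgnn : ∀ q (y : ℝ), 0 ≤ g q y := by
    intro q y
    by_cases hy : y ∈ Set.Ioi (0:ℝ)
    · simp only [hg, Set.indicator_of_mem hy]; exact hg0nn q y hy
    · simp only [hg, Set.indicator_of_notMem hy]; exact le_refl 0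
  have hsum0 : ∀ y : ℝ, 0 < y → Summable (fun q => g0 q y) := by
    intro y hy
    have s1 := bsummable ha (by positivity : (0:ℝ) < α*y)
    have s2 := bsummable ha (by positivity : (0:ℝ) < β*y)
    have hs := s1.mul_of_nonneg s2 (fun k => (bterm_pos ha (by positivity) k).le)
      (fun k => (bterm_pos ha (by positivity) k).le)
    exact hs.mul_right _
  have hsumg : ∀ y : ℝ, Summable (fun q => g q y) := by
    intro y
    by_cases hy : y ∈ Set.Ioi (0:ℝ)
    · refine Summable.congr (hsum0 y hy) fun q => ?_
      simp only [hg, Set.indicator_of_mem hy]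
    · refine Summable.congr summable_zero fun q => ?_
      simp only [hg, Set.indicator_of_notMem hy]
  have hfg : ∀ y ∈ Set.Ioi (0:ℝ),
      y * Real.exp (-c*y^2) * besselI a (α*y) * besselI a (β*y) = ∑' q, g q y := by
    intro y hy
    have hy' : (0:ℝ) < y := hy
    have s1 := bsummable ha (by positivity : (0:ℝ) < α*y)
    have s2 := bsummable ha (by positivity : (0:ℝ) < β*y)
    have hs := s1.mul_of_nonneg s2 (fun k => (bterm_pos ha (by positivity) k).le)
      (fun k => (bterm_pos ha (by positivity) k).le)
    have hmul : (∑' q : ℕ×ℕ, bterm a (α*y) q.1 * bterm a (β*y) q.2)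
        = besselI a (α*y) * besselI a (β*y) := by
      rw [besselI_eq_tsum, besselI_eq_tsum]
      exact (s1.hasSum.mul s2.hasSum hs).tsum_eq
    calc y * Real.exp (-c*y^2) * besselI a (α*y) * besselI a (β*y)
        = (∑' q : ℕ×ℕ, bterm a (α*y) q.1 * bterm a (β*y) q.2) * (y * Real.exp (-c*y^2)) := by
          rw [hmul]; ring
      _ = ∑' q : ℕ×ℕ, g0 q y := (tsum_mul_right).symm
      _ = ∑' q, g q y := by
          refine tsum_congr fun q => ?_
          simp only [hg, Set.indicator_of_mem hy]
  -- measurability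
  have hbm : ∀ (γ : ℝ) (k : ℕ), Measurable fun y : ℝ => bterm a (γ*y) k := by
    intro γ k
    have : Measurable fun y : ℝ => (γ*y)/2 := (measurable_id.const_mul γ).div_const 2
    exact ((measurable_rpow_const _).comp this).div_const _
  have hg0m : ∀ q, Measurable (g0 q) := by
    intro q
    exact ((hbm α q.1).mul (hbm β q.2)).mul
      (measurable_id.mul (Real.measurable_exp.comp ((measurable_id.pow_const 2).const_mul (-c))))
  have hgm : ∀ q, Measurable (g q) := fun q => (hg0m q).indicator measurableSet_Ioi
  have hGm : Measurable (fun y => ∑' q, g q y) := by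
    apply measurable_of_tendsto_metrizable' (Filter.atTop : Filter (Finset (ℕ×ℕ)))
      (fun s => Finset.measurable_sum s (fun q _ => hgm q))
    rw [tendsto_pi_nhds]
    intro y
    exact (hsumg y).hasSum
  -- pass to the Lebesgue integral
  have hae : 0 ≤ᵐ[volume.restrict (Set.Ioi (0:ℝ))]
      fun y => y * Real.exp (-c*y^2) * besselI a (α*y) * besselI a (β*y) := by
    refine (ae_restrict_iff' measurableSet_Ioi).2 (ae_of_all _ fun y hy => ?_)
    have hy' : (0:ℝ) < y := hy
    have h1 := besselI_pos ha (by positivity : (0:ℝ) < α*y)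
    have h2 := besselI_pos ha (by positivity : (0:ℝ) < β*y)
    have h3 : (0:ℝ) < Real.exp (-c*y^2) := Real.exp_pos _
    positivity
  have haesm : AEStronglyMeasurable
      (fun y => y * Real.exp (-c*y^2) * besselI a (α*y) * besselI a (β*y))
      (volume.restrict (Set.Ioi (0:ℝ))) := by
    refine ⟨fun y => ∑' q, g q y, hGm.stronglyMeasurable, ?_⟩
    refine (ae_restrict_iff' measurableSet_Ioi).2 (ae_of_all _ fun y hy => hfg y hy)
  rw [MeasureTheory.integral_eq_lintegral_of_nonneg_ae hae haesm]
  -- coefficients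
  set s : ℕ → ℕ → ℝ := fun k m => 2*(k:ℝ)+2*(m:ℝ)+2*a+1 with hs_def
  set C : ℕ → ℕ → ℝ := fun k m => (α/2) ^ (2*(k:ℝ)+a) * (β/2) ^ (2*(m:ℝ)+a) /
      (((k.factorial:ℝ) * Real.Gamma ((k:ℝ)+a+1)) * ((m.factorial:ℝ) * Real.Gamma ((m:ℝ)+a+1))) with hC_def
  set val : ℕ → ℕ → ℝ := fun k m => c ^ (-((k:ℝ)+(m:ℝ)+a+1)) * (1/2) * Real.Gamma ((k:ℝ)+(m:ℝ)+a+1) with hval_def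
  have hCpos : ∀ k m, 0 < C k m := by
    intro k m
    have h1 : (0:ℝ) < (α/2) ^ (2*(k:ℝ)+a) := Real.rpow_pos_of_pos (by positivity) _
    have h2 : (0:ℝ) < (β/2) ^ (2*(m:ℝ)+a) := Real.rpow_pos_of_pos (by positivity) _
    have h3 := gamma_pos_shift ha k
    have h4 := gamma_pos_shift ha m
    have h5 : (0:ℝ) < (k.factorial:ℝ) := by exact_mod_cast Nat.factorial_pos k
    have h6 : (0:ℝ) < (m.factorial:ℝ) := by exact_mod_cast Nat.factorial_pos m
    rw [hC_def]
    positivity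
  have hvalpos : ∀ k m, 0 < val k m := by
    intro k m
    have h1 : (0:ℝ) < c ^ (-((k:ℝ)+(m:ℝ)+a+1)) := Real.rpow_pos_of_pos hc _
    have h2 : (0:ℝ) < Real.Gamma ((k:ℝ)+(m:ℝ)+a+1) := Real.Gamma_pos_of_pos (by
      have : (0:ℝ) ≤ (k:ℝ) := Nat.cast_nonneg k
      have : (0:ℝ) ≤ (m:ℝ) := Nat.cast_nonneg m
      linarith)
    rw [hval_def]
    positivity
  have hg0key : ∀ (k m : ℕ) (y : ℝ), 0 < y →
      g0 (k,m) y = C k m * (y ^ (s k m) * Real.exp (-c*y^2)) := by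
    intro k m y hy
    have hα2 : (0:ℝ) ≤ α/2 := by positivity
    have hβ2 : (0:ℝ) ≤ β/2 := by positivity
    have e0a : α*y/2 = (α/2)*y := by ring
    have e0b : β*y/2 = (β/2)*y := by ring
    have e1 : ((α/2)*y) ^ (2*(k:ℝ)+a) = (α/2) ^ (2*(k:ℝ)+a) * y ^ (2*(k:ℝ)+a) :=
      Real.mul_rpow hα2 hy.le
    have e2 : ((β/2)*y) ^ (2*(m:ℝ)+a) = (β/2) ^ (2*(m:ℝ)+a) * y ^ (2*(m:ℝ)+a) :=
      Real.mul_rpow hβ2 hy.le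
    have e3 : y ^ (s k m) = y ^ (2*(k:ℝ)+a) * (y ^ (2*(m:ℝ)+a) * y) := by
      have harg : s k m = (2*(k:ℝ)+a) + ((2*(m:ℝ)+a) + 1) := by rw [hs_def]; ring
      rw [harg, Real.rpow_add hy (2*(k:ℝ)+a) ((2*(m:ℝ)+a) + 1),
        Real.rpow_add hy (2*(m:ℝ)+a) 1, Real.rpow_one]
    show bterm a (α*y) k * bterm a (β*y) m * (y * Real.exp (-c*y^2)) = _
    unfold bterm
    rw [e0a, e0b, e1, e2, hC_def, e3]
    ring
  have hL : (∫⁻ y in Set.Ioi (0:ℝ),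
        ENNReal.ofReal (y * Real.exp (-c*y^2) * besselI a (α*y) * besselI a (β*y)))
      = ∑' q : ℕ×ℕ, ENNReal.ofReal (C q.1 q.2 * val q.1 q.2) := by
    have step1 : (∫⁻ y in Set.Ioi (0:ℝ),
          ENNReal.ofReal (y * Real.exp (-c*y^2) * besselI a (α*y) * besselI a (β*y)))
        = ∫⁻ y in Set.Ioi (0:ℝ), ∑' q : ℕ×ℕ, ENNReal.ofReal (g q y) := by
      refine setLIntegral_congr_fun measurableSet_Ioi (fun y hy => ?_)
      rw [hfg y hy, ENNReal.ofReal_tsum_of_nonneg (fun q => hgnn q y) (hsumg y)]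
    have step2 : (∫⁻ y in Set.Ioi (0:ℝ), ∑' q : ℕ×ℕ, ENNReal.ofReal (g q y))
        = ∑' q : ℕ×ℕ, ∫⁻ y in Set.Ioi (0:ℝ), ENNReal.ofReal (g q y) :=
      lintegral_tsum (fun q => ((hgm q).ennreal_ofReal).aemeasurable)
    have step3 : ∀ q : ℕ×ℕ, (∫⁻ y in Set.Ioi (0:ℝ), ENNReal.ofReal (g q y))
        = ENNReal.ofReal (C q.1 q.2 * val q.1 q.2) := by
      rintro ⟨k, m⟩
      have hsq : (-1:ℝ) < s k m := by
        rw [hs_def]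
        have : (0:ℝ) ≤ (k:ℝ) := Nat.cast_nonneg k
        have : (0:ℝ) ≤ (m:ℝ) := Nat.cast_nonneg m
        simp only
        linarith
      have hint : IntegrableOn (fun y : ℝ => y ^ (s k m) * Real.exp (-c*y^2)) (Set.Ioi 0) :=
        (integrable_rpow_mul_exp_neg_mul_sq hc hsq).integrableOn
      have hnn : 0 ≤ᵐ[volume.restrict (Set.Ioi (0:ℝ))]
          fun y : ℝ => y ^ (s k m) * Real.exp (-c*y^2) := by
        refine (ae_restrict_iff' measurableSet_Ioi).2 (ae_of_all _ fun y hy => ?_)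
        have hy' : (0:ℝ) < y := hy
        have := Real.rpow_nonneg hy'.le (s k m)
        positivity
      have hval2 : ∫ y in Set.Ioi (0:ℝ), y ^ (s k m) * Real.exp (-c*y^2) = val k m := by
        have h2 : ∀ x : ℝ, x ^ ((2:ℕ):ℝ) = x ^ (2:ℕ) := fun x => Real.rpow_natCast x 2
        have hgauss := integral_rpow_mul_exp_neg_mul_rpow (p := ((2:ℕ):ℝ)) (q := s k m)
          (by norm_num) hsq hc
        rw [show ∫ y in Set.Ioi (0:ℝ), y ^ (s k m) * Real.exp (-c*y^2)
            = ∫ y in Set.Ioi (0:ℝ), y ^ (s k m) * Real.exp (-c*y^((2:ℕ):ℝ)) from by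
          refine setIntegral_congr_fun measurableSet_Ioi (fun y hy => ?_)
          rw [h2 y], hgauss, hval_def]
        have harg : (s k m + 1)/((2:ℕ):ℝ) = (k:ℝ)+(m:ℝ)+a+1 := by
          rw [hs_def]; push_cast; ring
        have harg2 : -(s k m + 1)/((2:ℕ):ℝ) = -((k:ℝ)+(m:ℝ)+a+1) := by
          rw [hs_def]; push_cast; ring
        rw [harg, harg2]
        norm_num
      calc (∫⁻ y in Set.Ioi (0:ℝ), ENNReal.ofReal (g (k,m) y))
          = ∫⁻ y in Set.Ioi (0:ℝ), ENNReal.ofReal (C k m) * ENNReal.ofReal (y ^ (s k m) * Real.exp (-c*y^2)) := by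
            refine setLIntegral_congr_fun measurableSet_Ioi (fun y hy => ?_)
            have hy' : (0:ℝ) < y := hy
            simp only [hg, Set.indicator_of_mem hy]
            rw [hg0key k m y hy', ENNReal.ofReal_mul (hCpos k m).le]
        _ = ENNReal.ofReal (C k m) * ∫⁻ y in Set.Ioi (0:ℝ), ENNReal.ofReal (y ^ (s k m) * Real.exp (-c*y^2)) :=
            lintegral_const_mul' _ _ ENNReal.ofReal_ne_top
        _ = ENNReal.ofReal (C k m) * ENNReal.ofReal (val k m) := by
            rw [← MeasureTheory.ofReal_integral_eq_lintegral_ofReal hint hnn, hval2]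
        _ = ENNReal.ofReal (C k m * val k m) := (ENNReal.ofReal_mul (hCpos k m).le).symm
    rw [step1, step2]
    exact tsum_congr step3
  rw [hL]
  -- evaluate the double series
  set X : ℝ := α^2/(4*c) with hX_def
  set Y : ℝ := β^2/(4*c) with hY_def
  set W : ℝ := α*β/(4*c) with hW_def
  have hXpos : 0 < X := by rw [hX_def]; positivity
  have hYpos : 0 < Y := by rw [hY_def]; positivity
  have hWpos : 0 < W := by rw [hW_def]; positivity
  set K : ℝ := (1/(2*c)) * W ^ a with hK_def
  have hKpos : 0 < K := by
    have := Real.rpow_pos_of_pos hWpos a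
    rw [hK_def]; positivity
  -- `C k m * val k m` in terms of `X, Y, K`
  have hpow : ∀ (u : ℝ), 0 < u → ∀ n : ℕ, u ^ (2*(n:ℝ)+a) = (u^2)^n * u ^ a := by
    intro u hu n
    rw [show 2*(n:ℝ)+a = ((2*n : ℕ):ℝ) + a by push_cast; ring,
      Real.rpow_add hu, Real.rpow_natCast, pow_mul]
  have hcpow : ∀ k m : ℕ, c ^ (-((k:ℝ)+(m:ℝ)+a+1)) = (c⁻¹)^k * (c⁻¹)^m * c ^ (-(a+1)) := by
    intro k m
    rw [show -((k:ℝ)+(m:ℝ)+a+1) = (-(k:ℝ)) + ((-(m:ℝ)) + (-(a+1))) by ring,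
      Real.rpow_add hc, Real.rpow_add hc,
      Real.rpow_neg hc.le (k:ℝ), Real.rpow_neg hc.le (m:ℝ),
      Real.rpow_natCast, Real.rpow_natCast, ← inv_pow, ← inv_pow]
    ring
  have hKeq : (α/2) ^ a * (β/2) ^ a * c ^ (-(a+1)) * (1/2) = K := by
    have h1 : (α/2) ^ a * (β/2) ^ a = (α*β/4) ^ a := by
      rw [← Real.mul_rpow (by positivity) (by positivity),
        show (α/2)*(β/2) = α*β/4 by ring]
    have h2 : c ^ (-(a+1)) = (c⁻¹) ^ a * c⁻¹ := by
      rw [show -(a+1) = (-a) + (-1) by ring, Real.rpow_add hc, Real.rpow_neg hc.le,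
        Real.rpow_neg_one, ← Real.inv_rpow hc.le]
    have h3 : (α*β/4 : ℝ) ^ a * (c⁻¹) ^ a = W ^ a := by
      rw [← Real.mul_rpow (by positivity) (by positivity), hW_def,
        show (α*β/4) * c⁻¹ = α*β/(4*c) by field_simp]
    rw [h1, h2, hK_def]
    calc (α*β/4:ℝ) ^ a * ((c⁻¹) ^ a * c⁻¹) * (1/2)
        = ((α*β/4:ℝ) ^ a * (c⁻¹) ^ a) * (c⁻¹ * (1/2)) := by ring
      _ = W ^ a * (c⁻¹ * (1/2)) := by rw [h3]
      _ = 1/(2*c) * W ^ a := by ring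
  have hXeq : ((α/2:ℝ)^2) * c⁻¹ = X := by rw [hX_def]; ring
  have hYeq : ((β/2:ℝ)^2) * c⁻¹ = Y := by rw [hY_def]; ring
  have hV : ∀ k m : ℕ, C k m * val k m
      = K * (X^k * Y^m * (Real.Gamma ((k:ℝ)+(m:ℝ)+a+1) /
          ((k.factorial:ℝ) * Real.Gamma ((k:ℝ)+a+1) * ((m.factorial:ℝ) * Real.Gamma ((m:ℝ)+a+1))))) := by
    intro k m
    rw [hC_def, hval_def]
    simp only
    rw [hpow (α/2) (by positivity) k, hpow (β/2) (by positivity) m, hcpow k m, ← hKeq,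
      ← hXeq, ← hYeq]
    ring
  -- decompose each term via the Vandermonde/Gamma identity
  set ψ : ℕ → ℕ → ℕ → ℝ := fun k m i => if i ≤ m then
      K * (X^k * Y^m * (((i.factorial:ℝ) * (k-i).factorial * (m-i).factorial
        * Real.Gamma ((i:ℝ)+a+1))⁻¹)) else 0 with hψ_def
  have hψnn : ∀ k m i, 0 ≤ ψ k m i := by
    intro k m i
    rw [hψ_def]
    simp only
    split
    · have h3 := gamma_pos_shift ha i
      have h5 : (0:ℝ) < (i.factorial:ℝ) := by exact_mod_cast Nat.factorial_pos i
      have h6 : (0:ℝ) < ((k-i).factorial:ℝ) := by exact_mod_cast Nat.factorial_pos (k-i)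
      have h7 : (0:ℝ) < ((m-i).factorial:ℝ) := by exact_mod_cast Nat.factorial_pos (m-i)
      positivity
    · exact le_refl 0
  have hVdec : ∀ k m : ℕ, C k m * val k m = ∑ i ∈ Finset.range (k+1), ψ k m i := by
    intro k m
    rw [hV k m, coefid ha k m, Finset.mul_sum, Finset.mul_sum]
    refine Finset.sum_congr rfl fun i _ => ?_
    rw [hψ_def]
    simp only
    split
    · ring
    · simp
  set Φ : (ℕ×ℕ)×ℕ → ENNReal := fun p => if p.2 ≤ p.1.1 ∧ p.2 ≤ p.1.2 then
      ENNReal.ofReal (K * (X^p.1.1 * Y^p.1.2 * (((p.2.factorial:ℝ) * (p.1.1-p.2).factorial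
        * (p.1.2-p.2).factorial * Real.Gamma ((p.2:ℝ)+a+1))⁻¹))) else 0 with hΦ_def
  have hsum_to_Φ : ∀ k m : ℕ, ENNReal.ofReal (C k m * val k m) = ∑' i : ℕ, Φ ((k,m),i) := by
    intro k m
    rw [hVdec k m, ENNReal.ofReal_sum_of_nonneg (fun i _ => hψnn k m i)]
    rw [tsum_eq_sum (s := Finset.range (k+1)) (fun i hi => ?_)]
    · refine Finset.sum_congr rfl fun i hi => ?_
      have hik : i ≤ k := Nat.lt_succ_iff.mp (Finset.mem_range.mp hi)
      rw [hψ_def, hΦ_def]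
      simp only
      by_cases him : i ≤ m
      · rw [if_pos him, if_pos ⟨hik, him⟩]
      · rw [if_neg him, if_neg (by tauto), ENNReal.ofReal_zero]
    · have hik : ¬ (i ≤ k) := fun h => hi (Finset.mem_range.mpr (Nat.lt_succ_iff.mpr h))
      rw [hΦ_def]
      simp only
      rw [if_neg (by tauto)]
  -- reindex the triple sum
  have hreindex : (∑' q : ℕ×ℕ, ENNReal.ofReal (C q.1 q.2 * val q.1 q.2))
      = ∑' w : ℕ × ℕ × ℕ, Φ ((w.1 + w.2.1, w.1 + w.2.2), w.1) := by
    rw [show (∑' q : ℕ×ℕ, ENNReal.ofReal (C q.1 q.2 * val q.1 q.2)) = ∑' p : (ℕ×ℕ)×ℕ, Φ p from ?_]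
    · refine (Function.Injective.tsum_eq (f := Φ)
        (g := fun w : ℕ×ℕ×ℕ => ((w.1 + w.2.1, w.1 + w.2.2), w.1)) ?_ ?_).symm
      · intro w w' h
        simp only [Prod.mk.injEq] at h
        obtain ⟨⟨h1, h2⟩, h3⟩ := h
        have : w.2.1 = w'.2.1 := by omega
        have : w.2.2 = w'.2.2 := by omega
        exact Prod.ext h3 (Prod.ext ‹w.2.1 = w'.2.1› ‹w.2.2 = w'.2.2›)
      · intro p hp
        rcases p with ⟨⟨k, m⟩, i⟩
        have hcond : i ≤ k ∧ i ≤ m := by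
          by_contra hcon
          apply hp
          rw [hΦ_def]
          simp only
          rw [if_neg hcon]
        exact ⟨⟨i, k - i, m - i⟩, by
          simp only [Prod.mk.injEq]
          refine ⟨⟨?_, ?_⟩, trivial⟩ <;> omega⟩
    · calc (∑' q : ℕ×ℕ, ENNReal.ofReal (C q.1 q.2 * val q.1 q.2))
          = ∑' (q : ℕ×ℕ), ∑' (i : ℕ), Φ (q, i) := tsum_congr (fun q => hsum_to_Φ q.1 q.2)
        _ = ∑' p : (ℕ×ℕ)×ℕ, Φ p := (ENNReal.tsum_prod').symm
  rw [hreindex]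
  -- factor the triple sum
  set A : ℕ → ℝ := fun i => K * ((X*Y)^i / ((i.factorial:ℝ) * Real.Gamma ((i:ℝ)+a+1))) with hA_def
  set B : ℕ → ℝ := fun j => X^j / (j.factorial:ℝ) with hB_def
  set D : ℕ → ℝ := fun n => Y^n / (n.factorial:ℝ) with hD_def
  have hAnn : ∀ i, 0 ≤ A i := by
    intro i
    have h3 := gamma_pos_shift ha i
    have h5 : (0:ℝ) < (i.factorial:ℝ) := by exact_mod_cast Nat.factorial_pos i
    rw [hA_def]
    positivity
  have hBnn : ∀ j, 0 ≤ B j := by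
    intro j
    have h5 : (0:ℝ) < (j.factorial:ℝ) := by exact_mod_cast Nat.factorial_pos j
    rw [hB_def]
    positivity
  have hDnn : ∀ n, 0 ≤ D n := by
    intro n
    have h5 : (0:ℝ) < (n.factorial:ℝ) := by exact_mod_cast Nat.factorial_pos n
    rw [hD_def]
    positivity
  have hΦe : ∀ w : ℕ×ℕ×ℕ, Φ ((w.1+w.2.1, w.1+w.2.2), w.1)
      = ENNReal.ofReal (A w.1) * (ENNReal.ofReal (B w.2.1) * ENNReal.ofReal (D w.2.2)) := by
    rintro ⟨i, j, n⟩
    rw [hΦ_def]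
    simp only [Nat.add_sub_cancel_left]
    rw [if_pos ⟨Nat.le_add_right i j, Nat.le_add_right i n⟩]
    have h3 := gamma_pos_shift ha i
    have f1 : (0:ℝ) < (i.factorial:ℝ) := by exact_mod_cast Nat.factorial_pos i
    have f2 : (0:ℝ) < (j.factorial:ℝ) := by exact_mod_cast Nat.factorial_pos j
    have f3 : (0:ℝ) < (n.factorial:ℝ) := by exact_mod_cast Nat.factorial_pos n
    have key : K * (X^(i+j) * Y^(i+n) * (((i.factorial:ℝ) * (j.factorial:ℝ) * (n.factorial:ℝ)
        * Real.Gamma ((i:ℝ)+a+1))⁻¹)) = A i * (B j * D n) := by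
      rw [hA_def, hB_def, hD_def]
      simp only
      rw [pow_add, pow_add, mul_pow]
      field_simp
    rw [key, ENNReal.ofReal_mul (hAnn i), ENNReal.ofReal_mul (hBnn j)]
  -- the three one-dimensional sums
  have hw' : (0:ℝ) < α*β/(2*c) := by positivity
  have hbA : ∀ i, A i = (1/(2*c)) * bterm a (α*β/(2*c)) i := by
    intro i
    have h1 : (α*β/(2*c))/2 = W := by rw [hW_def]; ring
    have h2 : W ^ (2*(i:ℝ)+a) = ((X*Y))^i * W^a := by
      rw [hpow W hWpos i, show W^2 = X*Y from by rw [hW_def, hX_def, hY_def]; ring]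
    rw [hA_def]
    simp only
    unfold bterm
    rw [h1, h2, hK_def]
    ring
  have hsumA : Summable A :=
    Summable.congr ((bsummable ha hw').mul_left (1/(2*c))) (fun i => (hbA i).symm)
  have hSA : (∑' i, ENNReal.ofReal (A i))
      = ENNReal.ofReal ((1/(2*c)) * besselI a (α*β/(2*c))) := by
    rw [← ENNReal.ofReal_tsum_of_nonneg hAnn hsumA]
    congr 1
    rw [tsum_congr hbA, tsum_mul_left, besselI_eq_tsum]
  have hSB : (∑' j, ENNReal.ofReal (B j)) = ENNReal.ofReal (Real.exp X) := by
    rw [← ENNReal.ofReal_tsum_of_nonneg hBnn (Real.summable_pow_div_factorial X)]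
    rw [exp_tsum]
  have hSD : (∑' n, ENNReal.ofReal (D n)) = ENNReal.ofReal (Real.exp Y) := by
    rw [← ENNReal.ofReal_tsum_of_nonneg hDnn (Real.summable_pow_div_factorial Y)]
    rw [exp_tsum]
  have hBD : (∑' v : ℕ×ℕ, ENNReal.ofReal (B v.1) * ENNReal.ofReal (D v.2))
      = (∑' j, ENNReal.ofReal (B j)) * (∑' n, ENNReal.ofReal (D n)) := by
    calc (∑' v : ℕ×ℕ, ENNReal.ofReal (B v.1) * ENNReal.ofReal (D v.2))
        = ∑' j, ∑' n, ENNReal.ofReal (B j) * ENNReal.ofReal (D n) := ENNReal.tsum_prod'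
      _ = ∑' j, ENNReal.ofReal (B j) * (∑' n, ENNReal.ofReal (D n)) :=
          tsum_congr (fun j => ENNReal.tsum_mul_left)
      _ = (∑' j, ENNReal.ofReal (B j)) * (∑' n, ENNReal.ofReal (D n)) := ENNReal.tsum_mul_right
  have hbig : (∑' w : ℕ×ℕ×ℕ, Φ ((w.1 + w.2.1, w.1 + w.2.2), w.1))
      = ENNReal.ofReal ((1/(2*c)) * Real.exp ((α^2+β^2)/(4*c)) * besselI a (α*β/(2*c))) := by
    calc (∑' w : ℕ×ℕ×ℕ, Φ ((w.1 + w.2.1, w.1 + w.2.2), w.1))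
        = ∑' w : ℕ×ℕ×ℕ, ENNReal.ofReal (A w.1) * (ENNReal.ofReal (B w.2.1) * ENNReal.ofReal (D w.2.2)) :=
          tsum_congr hΦe
      _ = ∑' i, ∑' v : ℕ×ℕ, ENNReal.ofReal (A i) * (ENNReal.ofReal (B v.1) * ENNReal.ofReal (D v.2)) :=
          ENNReal.tsum_prod'
      _ = ∑' i, ENNReal.ofReal (A i) * (∑' v : ℕ×ℕ, ENNReal.ofReal (B v.1) * ENNReal.ofReal (D v.2)) :=
          tsum_congr (fun i => ENNReal.tsum_mul_left)
      _ = (∑' i, ENNReal.ofReal (A i)) * ((∑' j, ENNReal.ofReal (B j)) * (∑' n, ENNReal.ofReal (D n))) := by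
          rw [hBD]
          exact ENNReal.tsum_mul_right
      _ = ENNReal.ofReal ((1/(2*c)) * besselI a (α*β/(2*c)))
            * (ENNReal.ofReal (Real.exp X) * ENNReal.ofReal (Real.exp Y)) := by
          rw [hSA, hSB, hSD]
      _ = ENNReal.ofReal ((1/(2*c)) * besselI a (α*β/(2*c)) * (Real.exp X * Real.exp Y)) := by
          rw [← ENNReal.ofReal_mul (Real.exp_nonneg X)]
          rw [← ENNReal.ofReal_mul (by
            have := besselI_pos ha hw'
            positivity : (0:ℝ) ≤ (1/(2*c)) * besselI a (α*β/(2*c)))]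
      _ = ENNReal.ofReal ((1/(2*c)) * Real.exp ((α^2+β^2)/(4*c)) * besselI a (α*β/(2*c))) := by
          congr 1
          rw [← Real.exp_add, show X + Y = (α^2+β^2)/(4*c) from by rw [hX_def, hY_def]; ring]
          ring
  rw [hbig, ENNReal.toReal_ofReal (by
    have := besselI_pos ha hw'
    have := Real.exp_pos ((α^2+β^2)/(4*c))
    positivity : (0:ℝ) ≤ (1/(2*c)) * Real.exp ((α^2+β^2)/(4*c)) * besselI a (α*β/(2*c)))]

/-- The generalized Laplace transform identity (3.24) for the transition
density (3.25) of the Bessel process with drift of Pitman and Yor. -/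
theorem stmt_9 (a b t x lam : ℝ) (ha : -1 < a) (hb : 0 < b)
    (ht : 0 < t) (hx : 0 < x) (hlam : 0 ≤ lam)
    (p : ℝ → ℝ)
    (hp : ∀ y, p y = (y * besselI a (b * y) / (t * besselI a (b * x)))
        * Real.exp (-(x ^ 2 + y ^ 2) / (2 * t) - b ^ 2 * t / 2)
        * besselI a (x * y / t)) :
    (∫ y in Set.Ioi (0 : ℝ), Real.exp (-lam * y ^ 2) * p y)
      = (besselI a (b * x / (1 + 2 * lam * t)) / ((1 + 2 * lam * t) * besselI a (b * x)))
        * Real.exp (-lam * (x ^ 2 + b ^ 2 * t ^ 2) / (1 + 2 * lam * t)) := by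
  have h2lt : (0:ℝ) < 1 + 2*lam*t := by nlinarith
  set c : ℝ := lam + 1/(2*t) with hc_def
  have hc : 0 < c := by rw [hc_def]; positivity
  have hβ : 0 < x/t := by positivity
  have hI0 : 0 < besselI a (b*x) := besselI_pos ha (by positivity)
  have key := weber (a := a) (c := c) (α := b) (β := x/t) ha hc hb hβ
  have hcongr : ∀ y ∈ Set.Ioi (0:ℝ), Real.exp (-lam * y ^ 2) * p y
      = ((t * besselI a (b*x))⁻¹ * Real.exp (-(x^2)/(2*t) - b^2*t/2))
        * (y * Real.exp (-c*y^2) * besselI a (b*y) * besselI a ((x/t)*y)) := by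
    intro y hy
    rw [hp y, show x*y/t = (x/t)*y by ring]
    have hexp : Real.exp (-lam * y ^ 2) * Real.exp (-(x^2+y^2)/(2*t) - b^2*t/2)
        = Real.exp (-(x^2)/(2*t) - b^2*t/2) * Real.exp (-c*y^2) := by
      rw [← Real.exp_add, ← Real.exp_add]
      congr 1
      rw [hc_def]
      field_simp
      ring
    calc Real.exp (-lam * y ^ 2) * ((y * besselI a (b*y) / (t * besselI a (b*x)))
          * Real.exp (-(x^2+y^2)/(2*t) - b^2*t/2) * besselI a ((x/t)*y))
        = (t * besselI a (b*x))⁻¹ * (y * besselI a (b*y) * besselI a ((x/t)*y))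
            * (Real.exp (-lam * y ^ 2) * Real.exp (-(x^2+y^2)/(2*t) - b^2*t/2)) := by ring
      _ = (t * besselI a (b*x))⁻¹ * (y * besselI a (b*y) * besselI a ((x/t)*y))
            * (Real.exp (-(x^2)/(2*t) - b^2*t/2) * Real.exp (-c*y^2)) := by rw [hexp]
      _ = ((t * besselI a (b*x))⁻¹ * Real.exp (-(x^2)/(2*t) - b^2*t/2))
            * (y * Real.exp (-c*y^2) * besselI a (b*y) * besselI a ((x/t)*y)) := by ring
  rw [setIntegral_congr_fun measurableSet_Ioi (fun y hy => hcongr y hy),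
    MeasureTheory.integral_const_mul, key]
  have harg2 : b*(x/t)/(2*c) = b*x/(1+2*lam*t) := by
    rw [hc_def]; field_simp; ring
  have hexp2 : Real.exp (-(x^2)/(2*t) - b^2*t/2) * Real.exp ((b^2+(x/t)^2)/(4*c))
      = Real.exp (-lam*(x^2+b^2*t^2)/(1+2*lam*t)) := by
    rw [← Real.exp_add]
    congr 1
    rw [hc_def]
    field_simp
    ring
  have hcoef : 1 + 2*lam*t = t*(2*c) := by rw [hc_def]; field_simp; ring
  rw [harg2, ← hexp2, hcoef]
  have hcne : c ≠ 0 := hc.ne'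
  field_simp
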